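/- For n ≡ 0 (mod 3), the sequence (100)^{n/3} 10 of length n + 2 is a binary robust positioning sequence of strength n and distance 2n/3: any two of its three contiguous subwords of length n have Hamming distance at least 2n/3. -/

import Mathlib

/-- The contiguous length-`n` window of the sequence `s` starting at position `i`. -/
def window {α : Type*} (s : ℕ → α) (n i : ℕ) : Fin n → α := fun k => s (i + k)

/-- `s` (restricted to its first `N` entries) is a robust positioning sequence of strength `n`
and distance `d`. -/
def IsRPS {α : Type*} [DecidableEq α] (s : ℕ → α) (N n d : ℕ) : Prop :=
  ∀ i j : ℕ, i + n ≤ N → j + n ≤ N → i ≠ j →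
    d ≤ hammingDist (window s n i) (window s n j)

lemma sum_key (a b : ℕ) (ha : a < 3) (hb : b < 3) (hab : a ≠ b) (m : ℕ) :
    ∑ k ∈ Finset.range (3 * m),
      (if decide ((a + k) % 3 = 0) ≠ decide ((b + k) % 3 = 0) then 1 else 0) = 2 * m := by
  induction m with
  | zero => simp
  | succ m ih =>
    have h3 : 3 * (m + 1) = (3 * m) + 1 + 1 + 1 := by ring
    rw [h3, Finset.sum_range_succ, Finset.sum_range_succ, Finset.sum_range_succ, ih]
    have e0 : (a + 3 * m) % 3 = a % 3 := by omega
    have e0' : (b + 3 * m) % 3 = b % 3 := by omega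
    have e1 : (a + (3 * m + 1)) % 3 = (a + 1) % 3 := by omega
    have e1' : (b + (3 * m + 1)) % 3 = (b + 1) % 3 := by omega
    have e2 : (a + (3 * m + 1 + 1)) % 3 = (a + 2) % 3 := by omega
    have e2' : (b + (3 * m + 1 + 1)) % 3 = (b + 2) % 3 := by omega
    rw [e0, e0', e1, e1', e2, e2']
    interval_cases a <;> interval_cases b <;> simp_all <;> omega

/-- For `n ≡ 0 (mod 3)`, the sequence `(100)^{n/3} 10` of length `n + 2` (whose `j`-th entry is
`1` iff `j ≡ 0 (mod 3)`) is a binary robust positioning sequence of strength `n` and distance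
`2n/3`: any two of its three contiguous length-`n` subwords have Hamming distance `≥ 2n/3`. -/
theorem period_three_seq_is_rps (n : ℕ) (h3 : 3 ∣ n) :
    IsRPS (fun j => decide (j % 3 = 0)) (n + 2) n (2 * n / 3) := by
  obtain ⟨m, rfl⟩ := h3
  intro i j hi hj hij
  have hi2 : i < 3 := by omega
  have hj2 : j < 3 := by omega
  have : hammingDist (window (fun j => decide (j % 3 = 0)) (3 * m) i)
      (window (fun j => decide (j % 3 = 0)) (3 * m) j) = 2 * m := by
    show (Finset.univ.filter fun k : Fin (3 * m) =>
        window (fun j => decide (j % 3 = 0)) (3 * m) i k ≠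
        window (fun j => decide (j % 3 = 0)) (3 * m) j k).card = 2 * m
    rw [Finset.card_filter]
    simp only [window]
    refine (Fin.sum_univ_eq_sum_range (fun k =>
      if decide ((i + k) % 3 = 0) ≠ decide ((j + k) % 3 = 0) then 1 else 0) (3 * m)).trans ?_
    exact sum_key i j hi2 hj2 hij m
  rw [this]
  omega
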